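/- For every ε > 0 and r ≥ 2 there exists C > 0 such that for all n ≥ r and m ≥ s ≥ C·log n, there is a bipartite graph with parts A of size n and B of size m in which every vertex of A has degree at least (1-ε)·s^{1/r}·m^{1-1/r} and any r vertices of A have at most s common neighbours; that is, w(n,m;r,s) ≥ (1-ε)·s^{1/r}·m^{1-1/r}. -/

import Mathlib

open Finset

section Machinery

lemma sum_fn_prod {ι κ : Type*} [Fintype ι] [DecidableEq ι] [Fintype κ] (g : ι → κ → ℝ) :
    ∑ f : ι → κ, ∏ i, g i (f i) = ∏ i, ∑ x, g i x := by
  classical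
  rw [Finset.prod_univ_sum, Fintype.piFinset_univ]

lemma sum_fn_prod2 {ι ι' κ : Type*} [Fintype ι] [DecidableEq ι] [Fintype ι'] [DecidableEq ι']
    [Fintype κ] (g : ι → ι' → κ → ℝ) :
    ∑ f : ι → ι' → κ, ∏ i, ∏ j, g i j (f i j) = ∏ i, ∏ j, ∑ x, g i j x := by
  classical
  rw [sum_fn_prod (κ := ι' → κ) (fun i y => ∏ j, g i j (y j))]
  exact Finset.prod_congr rfl fun i _ => sum_fn_prod _

variable {n m : ℕ} (p : ℝ)

/-- weight of a configuration in the Bernoulli(p) product model -/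
def Wt (ω : Fin n → Fin m → Bool) : ℝ := ∏ a, ∏ b, (if ω a b then p else 1 - p)

lemma Wt_nonneg (hp0 : 0 ≤ p) (hp1 : p ≤ 1) (ω : Fin n → Fin m → Bool) : 0 ≤ Wt p ω :=
  Finset.prod_nonneg fun a _ => Finset.prod_nonneg fun b _ => by
    split <;> linarith

lemma sum_Wt : ∑ ω : Fin n → Fin m → Bool, Wt p ω = 1 := by
  have h := sum_fn_prod2 (fun (_ : Fin n) (_ : Fin m) (x : Bool) => if x then p else 1 - p)
  simp only [Wt]
  rw [h]
  simp

lemma E_deg (a : Fin n) (t : ℝ) :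
    ∑ ω : Fin n → Fin m → Bool,
        Wt p ω * Real.exp (t * ((univ.filter fun b => ω a b).card : ℝ))
      = ((1 - p) + p * Real.exp t) ^ m := by
  classical
  have point : ∀ ω : Fin n → Fin m → Bool,
      Wt p ω * Real.exp (t * ((univ.filter fun b => ω a b).card : ℝ))
        = ∏ a', ∏ b, ((if ω a' b then p else 1 - p) *
            (if a' = a then Real.exp (t * (if ω a' b then 1 else 0)) else 1)) := by
    intro ω
    have hcard : ((univ.filter fun b => ω a b).card : ℝ)
        = ∑ b, (if ω a b then (1:ℝ) else 0) := by
      rw [Finset.card_filter]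
      push_cast
      exact Finset.sum_congr rfl fun b _ => by split <;> simp
    have hexp : Real.exp (t * ((univ.filter fun b => ω a b).card : ℝ))
        = ∏ b, Real.exp (t * (if ω a b then (1:ℝ) else 0)) := by
      rw [hcard, Finset.mul_sum, Real.exp_sum]
    have hsplit : (∏ b, Real.exp (t * (if ω a b then (1:ℝ) else 0)))
        = ∏ a', (if a' = a then ∏ b, Real.exp (t * (if ω a' b then (1:ℝ) else 0)) else 1) := by
      rw [Finset.prod_ite_eq' univ a
        (fun a' => ∏ b, Real.exp (t * (if ω a' b then (1:ℝ) else 0)))]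
      simp
    simp only [Wt]
    rw [hexp, hsplit, ← Finset.prod_mul_distrib]
    refine Finset.prod_congr rfl fun a' _ => ?_
    split
    · rw [← Finset.prod_mul_distrib]
    · simp
  rw [Finset.sum_congr rfl (fun ω _ => point ω)]
  have h := sum_fn_prod2 (fun (a' : Fin n) (_ : Fin m) (x : Bool) =>
    (if x then p else 1 - p) * (if a' = a then Real.exp (t * (if x then 1 else 0)) else 1))
  rw [h]
  have : ∀ a' : Fin n, ∀ _b : Fin m,
      (∑ x : Bool, (if x then p else 1 - p) *
        (if a' = a then Real.exp (t * (if x then 1 else 0)) else 1))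
      = if a' = a then (1 - p) + p * Real.exp t else 1 := by
    intro a' b
    rcases eq_or_ne a' a with h | h <;> simp [h] <;> ring
  rw [Finset.prod_congr rfl fun a' _ => Finset.prod_congr rfl fun b _ => this a' b]
  simp [Finset.prod_ite_eq' univ a (fun _ => ((1:ℝ) - p + p * Real.exp t) ^ m)]

lemma percol (T : Finset (Fin n)) (t : ℝ) :
    ∑ y : Fin n → Bool, (∏ a, (if y a then p else 1 - p)) *
        Real.exp (t * (if (∀ a ∈ T, y a) then (1:ℝ) else 0))
      = 1 + p ^ T.card * (Real.exp t - 1) := by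
  classical
  have hind : ∀ y : Fin n → Bool,
      Real.exp (t * (if (∀ a ∈ T, y a) then (1:ℝ) else 0))
        = 1 + (Real.exp t - 1) * (if (∀ a ∈ T, y a) then (1:ℝ) else 0) := by
    intro y; split <;> simp
  simp only [hind]
  have expand : ∀ y : Fin n → Bool,
      (∏ a, (if y a then p else 1 - p)) *
          (1 + (Real.exp t - 1) * (if (∀ a ∈ T, y a) then (1:ℝ) else 0))
      = (∏ a, (if y a then p else 1 - p)) + (Real.exp t - 1) *
          ((∏ a, (if y a then p else 1 - p)) * (if (∀ a ∈ T, y a) then (1:ℝ) else 0)) := by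
    intro y; ring
  simp only [expand]
  rw [Finset.sum_add_distrib, ← Finset.mul_sum]
  have h1 : ∑ y : Fin n → Bool, ∏ a, (if y a then p else 1 - p) = 1 := by
    have h := sum_fn_prod (fun (_ : Fin n) (x : Bool) => if x then p else 1 - p)
    rw [h]; simp
  have h2 : ∑ y : Fin n → Bool,
      (∏ a, (if y a then p else 1 - p)) * (if (∀ a ∈ T, y a) then (1:ℝ) else 0)
      = p ^ T.card := by
    have point : ∀ y : Fin n → Bool,
        (∏ a, (if y a then p else 1 - p)) * (if (∀ a ∈ T, y a) then (1:ℝ) else 0)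
        = ∏ a, ((if y a then p else 1 - p) * (if a ∈ T then (if y a then (1:ℝ) else 0) else 1)) := by
      intro y
      rw [Finset.prod_mul_distrib]
      congr 1
      rw [Finset.prod_ite_mem univ T (fun a => if y a then (1:ℝ) else 0), Finset.univ_inter,
        Finset.prod_boole]
      simp
    simp only [point]
    have h := sum_fn_prod (fun (a : Fin n) (x : Bool) =>
      (if x then p else 1 - p) * (if a ∈ T then (if x then (1:ℝ) else 0) else 1))
    rw [h]
    have : ∀ a : Fin n, (∑ x : Bool, (if x then p else 1 - p) *
        (if a ∈ T then (if x then (1:ℝ) else 0) else 1)) = if a ∈ T then p else 1 := by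
      intro a; by_cases ha : a ∈ T <;> simp [ha]
    rw [Finset.prod_congr rfl fun a _ => this a, Finset.prod_ite_mem univ T (fun _ => p),
      Finset.univ_inter, Finset.prod_const]
  rw [h1, h2]; ring

lemma E_inter (T : Finset (Fin n)) (t : ℝ) :
    ∑ ω : Fin n → Fin m → Bool,
        Wt p ω * Real.exp (t * ((univ.filter fun b => ∀ a ∈ T, ω a b).card : ℝ))
      = (1 + p ^ T.card * (Real.exp t - 1)) ^ m := by
  classical
  have point : ∀ ω : Fin n → Fin m → Bool,
      Wt p ω * Real.exp (t * ((univ.filter fun b => ∀ a ∈ T, ω a b).card : ℝ))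
        = ∏ b, ((∏ a, (if ω a b then p else 1 - p)) *
            Real.exp (t * (if (∀ a ∈ T, ω a b) then (1:ℝ) else 0))) := by
    intro ω
    have hcard : ((univ.filter fun b => ∀ a ∈ T, ω a b).card : ℝ)
        = ∑ b, (if (∀ a ∈ T, ω a b) then (1:ℝ) else 0) := by
      rw [Finset.card_filter]
      push_cast
      exact Finset.sum_congr rfl fun b _ => by split <;> simp
    rw [hcard, Finset.mul_sum, Real.exp_sum, Finset.prod_mul_distrib]
    congr 1
    simp only [Wt]
    exact Finset.prod_comm
  rw [Finset.sum_congr rfl (fun ω _ => point ω)]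
  have swapeq : ∑ ω : Fin n → Fin m → Bool, ∏ b, ((∏ a, (if ω a b then p else 1 - p)) *
        Real.exp (t * (if (∀ a ∈ T, ω a b) then (1:ℝ) else 0)))
      = ∑ ψ : Fin m → Fin n → Bool, ∏ b, ((∏ a, (if ψ b a then p else 1 - p)) *
        Real.exp (t * (if (∀ a ∈ T, ψ b a) then (1:ℝ) else 0))) := by
    have hsw : Function.Bijective
        (Function.swap : (Fin n → Fin m → Bool) → (Fin m → Fin n → Bool)) :=
      ⟨fun f g h => funext fun a => funext fun b => congrFun (congrFun h b) a,
       fun ψ => ⟨Function.swap ψ, rfl⟩⟩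
    exact Fintype.sum_bijective Function.swap hsw _ _ (fun ω => rfl)
  rw [swapeq]
  have h := sum_fn_prod (κ := Fin n → Bool) (fun (_ : Fin m) (y : Fin n → Bool) =>
    (∏ a, (if y a then p else 1 - p)) * Real.exp (t * (if (∀ a ∈ T, y a) then (1:ℝ) else 0)))
  rw [h, Finset.prod_congr rfl fun b _ => percol p T t, Finset.prod_const, Finset.card_univ,
    Fintype.card_fin]

variable {p}

lemma P_deg_le (hp0 : 0 ≤ p) (hp1 : p ≤ 1) (a : Fin n) (θ : ℝ) {t : ℝ} (ht : 0 ≤ t) :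
    ∑ ω : Fin n → Fin m → Bool,
        Wt p ω * (if ((univ.filter fun b => ω a b).card : ℝ) < θ then (1:ℝ) else 0)
      ≤ Real.exp (t * θ) * ((1 - p) + p * Real.exp (-t)) ^ m := by
  have key : ∀ ω : Fin n → Fin m → Bool,
      Wt p ω * (if ((univ.filter fun b => ω a b).card : ℝ) < θ then (1:ℝ) else 0)
        ≤ Real.exp (t * θ) * (Wt p ω * Real.exp (-t * ((univ.filter fun b => ω a b).card : ℝ))) := by
    intro ω
    set c : ℝ := ((univ.filter fun b => ω a b).card : ℝ) with hc
    have hW := Wt_nonneg p hp0 hp1 ω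
    by_cases h : c < θ
    · rw [if_pos h]
      have h1 : (1:ℝ) ≤ Real.exp (t * θ) * Real.exp (-t * c) := by
        rw [← Real.exp_add]
        have : 0 ≤ t * θ + -t * c := by nlinarith
        calc (1:ℝ) = Real.exp 0 := by simp
        _ ≤ _ := Real.exp_le_exp.2 this
      calc Wt p ω * 1 = 1 * Wt p ω := by ring
      _ ≤ (Real.exp (t * θ) * Real.exp (-t * c)) * Wt p ω :=
          mul_le_mul_of_nonneg_right h1 hW
      _ = Real.exp (t * θ) * (Wt p ω * Real.exp (-t * c)) := by ring
    · rw [if_neg h, mul_zero]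
      exact mul_nonneg (Real.exp_pos _).le (mul_nonneg hW (Real.exp_pos _).le)
  calc _ ≤ ∑ ω : Fin n → Fin m → Bool, Real.exp (t * θ) *
        (Wt p ω * Real.exp (-t * ((univ.filter fun b => ω a b).card : ℝ))) :=
      Finset.sum_le_sum fun ω _ => key ω
  _ = Real.exp (t * θ) * ((1 - p) + p * Real.exp (-t)) ^ m := by
      rw [← Finset.mul_sum, E_deg p a (-t)]

lemma P_inter_le (hp0 : 0 ≤ p) (hp1 : p ≤ 1) (T : Finset (Fin n)) (s : ℕ) {t : ℝ} (ht : 0 ≤ t) :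
    ∑ ω : Fin n → Fin m → Bool,
        Wt p ω * (if s < (univ.filter fun b => ∀ a ∈ T, ω a b).card then (1:ℝ) else 0)
      ≤ Real.exp (-(t * (s + 1))) * (1 + p ^ T.card * (Real.exp t - 1)) ^ m := by
  have key : ∀ ω : Fin n → Fin m → Bool,
      Wt p ω * (if s < (univ.filter fun b => ∀ a ∈ T, ω a b).card then (1:ℝ) else 0)
        ≤ Real.exp (-(t * (s + 1))) *
          (Wt p ω * Real.exp (t * ((univ.filter fun b => ∀ a ∈ T, ω a b).card : ℝ))) := by
    intro ω
    set c : ℕ := (univ.filter fun b => ∀ a ∈ T, ω a b).card with hc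
    have hW := Wt_nonneg p hp0 hp1 ω
    by_cases h : s < c
    · rw [if_pos h]
      have hsc : (s:ℝ) + 1 ≤ (c:ℝ) := by exact_mod_cast h
      have h1 : (1:ℝ) ≤ Real.exp (-(t * (s + 1))) * Real.exp (t * c) := by
        rw [← Real.exp_add]
        have : 0 ≤ -(t * (s + 1)) + t * c := by nlinarith
        calc (1:ℝ) = Real.exp 0 := by simp
        _ ≤ _ := Real.exp_le_exp.2 this
      calc Wt p ω * 1 = 1 * Wt p ω := by ring
      _ ≤ (Real.exp (-(t * (s+1))) * Real.exp (t * c)) * Wt p ω :=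
          mul_le_mul_of_nonneg_right h1 hW
      _ = _ := by ring
    · rw [if_neg h, mul_zero]
      exact mul_nonneg (Real.exp_pos _).le (mul_nonneg hW (Real.exp_pos _).le)
  calc _ ≤ _ := Finset.sum_le_sum fun ω _ => key ω
  _ = Real.exp (-(t * (s + 1))) * (1 + p ^ T.card * (Real.exp t - 1)) ^ m := by
      rw [← Finset.mul_sum, E_inter p T t]

lemma exists_good (hp0 : 0 ≤ p) (hp1 : p ≤ 1) (Bad : (Fin n → Fin m → Bool) → Prop)
    [DecidablePred Bad]
    (h : ∑ ω : Fin n → Fin m → Bool, Wt p ω * (if Bad ω then (1:ℝ) else 0) < 1) :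
    ∃ ω, ¬ Bad ω := by
  by_contra hc
  push_neg at hc
  have heq : ∑ ω : Fin n → Fin m → Bool, Wt p ω * (if Bad ω then (1:ℝ) else 0) = 1 := by
    conv_rhs => rw [← sum_Wt (n := n) (m := m) p]
    exact Finset.sum_congr rfl fun ω _ => by simp [hc ω]
  linarith

end Machinery

lemma ind_union_le {α β : Type*} (s₁ : Finset α) (s₂ : Finset β)
    (P : α → Prop) (Q : β → Prop) [DecidablePred P] [DecidablePred Q]
    [Decidable ((∃ a ∈ s₁, P a) ∨ (∃ b ∈ s₂, Q b))] :
    (if (∃ a ∈ s₁, P a) ∨ (∃ b ∈ s₂, Q b) then (1:ℝ) else 0)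
      ≤ (∑ a ∈ s₁, if P a then (1:ℝ) else 0) + ∑ b ∈ s₂, if Q b then (1:ℝ) else 0 := by
  have n1 : (0:ℝ) ≤ ∑ a ∈ s₁, if P a then (1:ℝ) else 0 :=
    Finset.sum_nonneg fun a _ => by split <;> norm_num
  have n2 : (0:ℝ) ≤ ∑ b ∈ s₂, if Q b then (1:ℝ) else 0 :=
    Finset.sum_nonneg fun b _ => by split <;> norm_num
  split
  · next h =>
    rcases h with ⟨a, ha, hPa⟩ | ⟨b, hb, hQb⟩
    · have : (1:ℝ) ≤ ∑ a ∈ s₁, if P a then (1:ℝ) else 0 := by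
        calc (1:ℝ) = if P a then (1:ℝ) else 0 := by rw [if_pos hPa]
        _ ≤ _ := Finset.single_le_sum (f := fun a => if P a then (1:ℝ) else 0)
            (fun i _ => by split <;> norm_num) ha
      linarith
    · have : (1:ℝ) ≤ ∑ b ∈ s₂, if Q b then (1:ℝ) else 0 := by
        calc (1:ℝ) = if Q b then (1:ℝ) else 0 := by rw [if_pos hQb]
        _ ≤ _ := Finset.single_le_sum (f := fun b => if Q b then (1:ℝ) else 0)
            (fun i _ => by split <;> norm_num) hb
      linarith
  · linarith

lemma exp_neg_sub_one_le {t : ℝ} (h0 : 0 ≤ t) : Real.exp (-t) - 1 ≤ -(t - t^2) := by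
  have h1 := Real.add_one_le_exp t
  have h2 : Real.exp (-t) * Real.exp t = 1 := by rw [← Real.exp_add]; simp
  have h4 := Real.exp_pos (-t)
  nlinarith [mul_le_mul_of_nonneg_left h1 h4.le, h0, sq_nonneg t, mul_nonneg (mul_nonneg h0 h0) h0]

lemma exp_le_quad {t : ℝ} (h0 : 0 ≤ t) (h2 : t ≤ 1/2) : Real.exp t ≤ 1 + t + 2*t^2 := by
  have h1 := Real.add_one_le_exp (-t)
  have hm : Real.exp (-t) * Real.exp t = 1 := by rw [← Real.exp_add]; simp
  have h3 := Real.exp_pos t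
  nlinarith [mul_le_mul_of_nonneg_right h1 h3.le, sq_nonneg t, mul_nonneg (mul_nonneg h0 h0) h0]

lemma one_add_le_exp_pow (m : ℕ) {x : ℝ} (hx : -1 ≤ x) : (1+x)^m ≤ Real.exp ((m:ℝ) * x) := by
  calc (1+x)^m ≤ (Real.exp x)^m :=
        pow_le_pow_left₀ (by linarith) (by linarith [Real.add_one_le_exp x]) m
  _ = Real.exp ((m:ℝ) * x) := (Real.exp_nat_mul x m).symm

set_option maxHeartbeats 2000000 in
theorem stmt10 (ε : ℝ) (hε : 0 < ε) (r : ℕ) (hr : 2 ≤ r) :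
    ∃ C : ℝ, 0 < C ∧ ∀ n m s : ℕ, r ≤ n → s ≤ m → C * Real.log n ≤ s →
      ∃ N : Fin n → Finset (Fin m),
        (∀ a, (1 - ε) * (s : ℝ) ^ ((1 : ℝ) / r) * (m : ℝ) ^ (1 - (1 : ℝ) / r)
          ≤ (N a).card) ∧
        (∀ T : Finset (Fin n), T.card = r →
          (Finset.univ.filter (fun b : Fin m => ∀ a ∈ T, b ∈ N a)).card ≤ s) := by
  classical
  set e : ℝ := min ε (1/2) with he_def
  have he0 : 0 < e := lt_min hε (by norm_num)
  have he2 : e ≤ 1/2 := min_le_right _ _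
  have heε : e ≤ ε := min_le_left _ _
  refine ⟨64*(r+1)/e^2, by positivity, ?_⟩
  intro n m s hn hsm hcs
  have hrR : (2:ℝ) ≤ (r:ℝ) := by exact_mod_cast hr
  have hn2 : 2 ≤ n := le_trans hr hn
  have hn2R : (2:ℝ) ≤ (n:ℝ) := by exact_mod_cast hn2
  have hlogn : 0 < Real.log n := Real.log_pos (by linarith)
  have hsR : (0:ℝ) < (s:ℝ) := lt_of_lt_of_le (by positivity) hcs
  have hs1 : 1 ≤ s := by exact_mod_cast Nat.one_le_iff_ne_zero.2 (by
    intro h; rw [h] at hsR; simp at hsR)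
  have hm1 : 1 ≤ m := le_trans hs1 hsm
  have hmR : (0:ℝ) < (m:ℝ) := by exact_mod_cast hm1
  have hsmR : (s:ℝ) ≤ (m:ℝ) := by exact_mod_cast hsm
  set c : ℝ := (1:ℝ)/(r:ℝ) with hc_def
  have hc0 : 0 < c := by positivity
  have hc1 : c ≤ 1/2 := by
    rw [hc_def, div_le_div_iff₀ (by linarith) (by norm_num)]; linarith
  set p : ℝ := (1 - e/2) * ((s:ℝ)/(m:ℝ)) ^ c with hp_def
  have h1e0 : (0:ℝ) < 1 - e/2 := by linarith
  have hdiv0 : (0:ℝ) ≤ (s:ℝ)/(m:ℝ) := by positivity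
  have hdiv1 : (s:ℝ)/(m:ℝ) ≤ 1 := by rw [div_le_one hmR]; exact hsmR
  have hp0 : 0 ≤ p := mul_nonneg (by linarith) (Real.rpow_nonneg hdiv0 _)
  have hp1 : p ≤ 1 := mul_le_one₀ (by linarith) (Real.rpow_nonneg hdiv0 _)
    (Real.rpow_le_one hdiv0 hdiv1 hc0.le)
  set M0 : ℝ := (s:ℝ)^c * (m:ℝ)^(1-c) with hM0_def
  have hM0pos : 0 < M0 :=
    mul_pos (Real.rpow_pos_of_pos hsR _) (Real.rpow_pos_of_pos hmR _)
  have hPM : ((s:ℝ)/(m:ℝ)) ^ c * (m:ℝ) = M0 := by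
    rw [Real.div_rpow hsR.le hmR.le, hM0_def, Real.rpow_sub hmR, Real.rpow_one]
    field_simp
  have hcr : c * (r:ℝ) = 1 := by
    rw [hc_def]; field_simp
  have hqr : p^r = (1-e/2)^r * ((s:ℝ)/(m:ℝ)) := by
    rw [hp_def, mul_pow, ← Real.rpow_natCast (((s:ℝ)/(m:ℝ))^c) r,
      ← Real.rpow_mul hdiv0, hcr, Real.rpow_one]
  have hmq : (m:ℝ) * p^r = (1-e/2)^r * (s:ℝ) := by
    rw [hqr]; field_simp
  have hM0s : (s:ℝ) ≤ M0 := by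
    have h1 : (s:ℝ)^(1-c) ≤ (m:ℝ)^(1-c) :=
      Real.rpow_le_rpow hsR.le hsmR (by linarith)
    have h2 : (s:ℝ)^c * (s:ℝ)^(1-c) = (s:ℝ) := by
      rw [← Real.rpow_add hsR]; norm_num
    calc (s:ℝ) = (s:ℝ)^c * (s:ℝ)^(1-c) := h2.symm
    _ ≤ M0 := by
        rw [hM0_def]
        exact mul_le_mul_of_nonneg_left h1 (Real.rpow_nonneg hsR.le _)
  set t : ℝ := e/8 with ht_def
  have ht0 : 0 ≤ t := by rw [ht_def]; linarith
  have ht16 : t ≤ 1/16 := by rw [ht_def]; linarith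
  set D : ℝ := (1-e) * M0 with hD_def
  -- tail bound 1
  have bound1 : Real.exp (t*D) * ((1-p) + p*Real.exp (-t))^m
      ≤ Real.exp (-(e^2*(s:ℝ)/32)) := by
    have hxge : (-1:ℝ) ≤ p * (Real.exp (-t) - 1) := by
      nlinarith [Real.exp_pos (-t)]
    have h2 : ((1-p) + p*Real.exp (-t))^m
        ≤ Real.exp ((m:ℝ) * (p * (Real.exp (-t) - 1))) := by
      have hb : ((1-p) + p*Real.exp (-t)) = 1 + p * (Real.exp (-t) - 1) := by ring
      rw [hb]; exact one_add_le_exp_pow m hxge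
    have h3 : Real.exp (t*D) * ((1-p)+p*Real.exp (-t))^m
        ≤ Real.exp (t*D + (m:ℝ)*(p*(Real.exp (-t)-1))) := by
      rw [Real.exp_add]; exact mul_le_mul_of_nonneg_left h2 (Real.exp_pos _).le
    refine h3.trans (Real.exp_le_exp.2 ?_)
    have hmp : (m:ℝ) * p = (1-e/2) * M0 := by
      rw [hp_def, ← hPM]; ring
    have hN1 : Real.exp (-t) - 1 ≤ -(t - t^2) := exp_neg_sub_one_le ht0
    have hle : (m:ℝ)*(p*(Real.exp (-t)-1)) ≤ (1-e/2)*M0 * (-(t - t^2)) := by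
      calc (m:ℝ)*(p*(Real.exp (-t)-1)) = ((m:ℝ)*p)*(Real.exp (-t)-1) := by ring
      _ ≤ ((m:ℝ)*p) * (-(t-t^2)) :=
          mul_le_mul_of_nonneg_left hN1 (mul_nonneg hmR.le hp0)
      _ = (1-e/2)*M0*(-(t-t^2)) := by rw [hmp]
    have hfin : t*D + (1-e/2)*M0*(-(t-t^2)) ≤ -(e^2*(s:ℝ)/32) := by
      have hcoef : t*(1-e) - (1-e/2)*(t-t^2) ≤ -(3/64)*e^2 := by
        rw [ht_def]; nlinarith [he0.le, sq_nonneg e, mul_nonneg (mul_nonneg he0.le he0.le) he0.le]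
      calc t*D + (1-e/2)*M0*(-(t-t^2))
          = M0 * (t*(1-e) - (1-e/2)*(t-t^2)) := by rw [hD_def]; ring
      _ ≤ M0 * (-(3/64)*e^2) := mul_le_mul_of_nonneg_left hcoef hM0pos.le
      _ ≤ (s:ℝ) * (-(3/64)*e^2) :=
          mul_le_mul_of_nonpos_right hM0s (by nlinarith [sq_nonneg e])
      _ ≤ -(e^2*(s:ℝ)/32) := by nlinarith [sq_nonneg e, hsR.le, mul_nonneg (sq_nonneg e) hsR.le]
    linarith
  -- tail bound 2
  have bound2 : ∀ T : Finset (Fin n), T ∈ Finset.powersetCard r (univ : Finset (Fin n)) →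
      Real.exp (-(t*((s:ℝ)+1))) * (1 + p^T.card*(Real.exp t - 1))^m
        ≤ Real.exp (-(e^2*(s:ℝ)/32)) := by
    intro T hT
    have hTcard : T.card = r := (Finset.mem_powersetCard.1 hT).2
    rw [hTcard]
    have hexp1 : (1:ℝ) ≤ Real.exp t := Real.one_le_exp ht0
    have hx0 : 0 ≤ p^r * (Real.exp t - 1) :=
      mul_nonneg (pow_nonneg hp0 r) (by linarith)
    have h2 : (1 + p^r*(Real.exp t - 1))^m
        ≤ Real.exp ((m:ℝ)*(p^r*(Real.exp t -1))) := one_add_le_exp_pow m (by linarith)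
    have h3 : Real.exp (-(t*((s:ℝ)+1))) * (1 + p^r*(Real.exp t - 1))^m
        ≤ Real.exp ((m:ℝ)*(p^r*(Real.exp t -1)) - t*((s:ℝ)+1)) := by
      rw [show (m:ℝ)*(p^r*(Real.exp t -1)) - t*((s:ℝ)+1)
        = -(t*((s:ℝ)+1)) + (m:ℝ)*(p^r*(Real.exp t -1)) by ring, Real.exp_add]
      exact mul_le_mul_of_nonneg_left h2 (Real.exp_pos _).le
    refine h3.trans (Real.exp_le_exp.2 ?_)
    have h1r : (1-e/2)^r ≤ 1-e/2 :=
      pow_le_of_le_one (by linarith) (by linarith) (by omega)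
    have hquad : Real.exp t - 1 ≤ t + 2*t^2 := by
      have := exp_le_quad ht0 (by linarith)
      linarith
    have hle : (m:ℝ)*(p^r*(Real.exp t -1)) ≤ (1-e/2)*(s:ℝ)*(t+2*t^2) := by
      calc (m:ℝ)*(p^r*(Real.exp t -1)) = ((m:ℝ)*p^r)*(Real.exp t -1) := by ring
      _ = ((1-e/2)^r*(s:ℝ))*(Real.exp t -1) := by rw [hmq]
      _ ≤ ((1-e/2)*(s:ℝ))*(t+2*t^2) := by
          apply mul_le_mul
          · exact mul_le_mul_of_nonneg_right h1r hsR.le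
          · exact hquad
          · linarith
          · positivity
      _ = (1-e/2)*(s:ℝ)*(t+2*t^2) := by ring
    have hfin : (1-e/2)*(s:ℝ)*(t+2*t^2) - t*((s:ℝ)+1) ≤ -(e^2*(s:ℝ)/32) := by
      rw [ht_def]
      nlinarith [hsR.le, he0.le, mul_nonneg (mul_nonneg he0.le he0.le) he0.le,
        mul_nonneg (mul_nonneg (mul_nonneg he0.le he0.le) he0.le) hsR.le]
    linarith
  -- the bad event
  set Bad : (Fin n → Fin m → Bool) → Prop := fun ω =>
    (∃ a ∈ (univ : Finset (Fin n)), ((univ.filter fun b => ω a b).card : ℝ) < D) ∨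
    (∃ T ∈ Finset.powersetCard r (univ : Finset (Fin n)),
      s < (univ.filter fun b => ∀ a ∈ T, ω a b).card) with hBad_def
  have hsumlt : ∑ ω : Fin n → Fin m → Bool, Wt p ω * (if Bad ω then (1:ℝ) else 0) < 1 := by
    set E : ℝ := Real.exp (-(e^2*(s:ℝ)/32)) with hE_def
    have hE0 : 0 < E := Real.exp_pos _
    have step1 : ∑ ω : Fin n → Fin m → Bool, Wt p ω * (if Bad ω then (1:ℝ) else 0)
        ≤ (∑ _a : Fin n, E) + ∑ _T ∈ Finset.powersetCard r (univ : Finset (Fin n)), E := by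
      calc ∑ ω : Fin n → Fin m → Bool, Wt p ω * (if Bad ω then (1:ℝ) else 0)
          ≤ ∑ ω : Fin n → Fin m → Bool, Wt p ω *
            ((∑ a : Fin n, (if ((univ.filter fun b => ω a b).card : ℝ) < D then (1:ℝ) else 0))
            + ∑ T ∈ Finset.powersetCard r (univ : Finset (Fin n)),
                (if s < (univ.filter fun b => ∀ a ∈ T, ω a b).card then (1:ℝ) else 0)) := by
            refine Finset.sum_le_sum fun ω _ => ?_
            exact mul_le_mul_of_nonneg_left (ind_union_le _ _ _ _) (Wt_nonneg p hp0 hp1 ω)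
      _ = (∑ a : Fin n, ∑ ω : Fin n → Fin m → Bool, Wt p ω *
            (if ((univ.filter fun b => ω a b).card : ℝ) < D then (1:ℝ) else 0))
          + ∑ T ∈ Finset.powersetCard r (univ : Finset (Fin n)),
            ∑ ω : Fin n → Fin m → Bool, Wt p ω *
            (if s < (univ.filter fun b => ∀ a ∈ T, ω a b).card then (1:ℝ) else 0) := by
            simp only [mul_add, Finset.mul_sum]
            rw [Finset.sum_add_distrib]
            congr 1
            · exact Finset.sum_comm
            · exact Finset.sum_comm
      _ ≤ (∑ _a : Fin n, E) + ∑ _T ∈ Finset.powersetCard r (univ : Finset (Fin n)), E := by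
            apply add_le_add
            · refine Finset.sum_le_sum fun a _ => ?_
              exact (P_deg_le hp0 hp1 a D ht0).trans bound1
            · refine Finset.sum_le_sum fun T hT => ?_
              exact (P_inter_le hp0 hp1 T s ht0).trans (bound2 T hT)
    have hcount : (∑ _a : Fin n, E) + ∑ _T ∈ Finset.powersetCard r (univ : Finset (Fin n)), E
        = ((n:ℝ) + (Nat.choose n r : ℝ)) * E := by
      simp only [Finset.sum_const, Finset.card_powersetCard, Finset.card_univ,
        Fintype.card_fin, nsmul_eq_mul]
      ring
    have hchoose : ((Nat.choose n r : ℕ) : ℝ) ≤ (n:ℝ)^r := by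
      exact_mod_cast Nat.choose_le_pow n r
    have hnler : (n:ℝ) ≤ (n:ℝ)^r := by
      calc (n:ℝ) = (n:ℝ)^1 := (pow_one _).symm
      _ ≤ (n:ℝ)^r := pow_le_pow_right₀ (by linarith) (by omega)
    have hkey : ((n:ℝ))^(2*r+2) * E ≤ 1 := by
      have hlogle : ((2*r+2 : ℕ):ℝ) * Real.log n ≤ e^2*(s:ℝ)/32 := by
        have h := mul_le_mul_of_nonneg_left hcs (le_of_lt (show (0:ℝ) < e^2/32 by positivity))
        have heq2 : e^2/32 * (64*(r+1)/e^2 * Real.log n) = ((2*r+2:ℕ):ℝ) * Real.log n := by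
          push_cast
          field_simp
          ring
        rw [heq2] at h
        calc ((2*r+2:ℕ):ℝ) * Real.log n ≤ e^2/32 * (s:ℝ) := h
        _ = e^2*(s:ℝ)/32 := by ring
      have hpow : ((n:ℝ))^(2*r+2) = Real.exp (((2*r+2:ℕ):ℝ) * Real.log n) := by
        rw [Real.exp_nat_mul, Real.exp_log (by linarith)]
      rw [hpow, hE_def, ← Real.exp_add]
      calc Real.exp (((2*r+2:ℕ):ℝ) * Real.log n + -(e^2*(s:ℝ)/32)) ≤ Real.exp 0 :=
        Real.exp_le_exp.2 (by linarith)
      _ = 1 := Real.exp_zero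
    have h2n : 2*(n:ℝ)^r ≤ (1/8) * (n:ℝ)^(2*r+2) := by
      have hsplit : (n:ℝ)^(2*r+2) = (n:ℝ)^r * (n:ℝ)^(r+2) := by
        rw [← pow_add]; ring_nf
      have h16 : (16:ℝ) ≤ (n:ℝ)^(r+2) := by
        calc (16:ℝ) = 2^4 := by norm_num
        _ ≤ (2:ℝ)^(r+2) := pow_le_pow_right₀ (by norm_num) (by omega)
        _ ≤ (n:ℝ)^(r+2) := pow_le_pow_left₀ (by norm_num) hn2R _
      have hnr0 : (0:ℝ) ≤ (n:ℝ)^r := by positivity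
      rw [hsplit]
      nlinarith
    calc ∑ ω : Fin n → Fin m → Bool, Wt p ω * (if Bad ω then (1:ℝ) else 0)
        ≤ ((n:ℝ) + (Nat.choose n r : ℝ)) * E := by rw [← hcount]; exact step1
    _ ≤ (2*(n:ℝ)^r) * E := by
        apply mul_le_mul_of_nonneg_right _ hE0.le
        linarith
    _ ≤ ((1/8) * (n:ℝ)^(2*r+2)) * E := mul_le_mul_of_nonneg_right h2n hE0.le
    _ = (1/8) * ((n:ℝ)^(2*r+2) * E) := by ring
    _ ≤ (1/8) * 1 := by
        apply mul_le_mul_of_nonneg_left hkey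
        norm_num
    _ < 1 := by norm_num
  obtain ⟨ω, hgood⟩ := exists_good hp0 hp1 Bad hsumlt
  have hgood1 : ∀ a : Fin n, D ≤ ((univ.filter fun b => ω a b).card : ℝ) := by
    intro a
    by_contra hlt
    push_neg at hlt
    exact hgood (Or.inl ⟨a, Finset.mem_univ a, hlt⟩)
  have hgood2 : ∀ T ∈ Finset.powersetCard r (univ : Finset (Fin n)),
      (univ.filter fun b => ∀ a ∈ T, ω a b).card ≤ s := by
    intro T hT
    by_contra hlt
    push_neg at hlt
    exact hgood (Or.inr ⟨T, hT, hlt⟩)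
  refine ⟨fun a => univ.filter (fun b => ω a b), ?_, ?_⟩
  · intro a
    have h1 : D ≤ ((univ.filter fun b => ω a b).card : ℝ) := hgood1 a
    have h2 : (1-ε) * (s:ℝ)^c * (m:ℝ)^(1-c) ≤ D := by
      rw [hD_def, hM0_def]
      have : (1-ε) ≤ (1-e) := by linarith
      nlinarith [hM0pos, Real.rpow_nonneg hsR.le c, Real.rpow_pos_of_pos hsR c,
        Real.rpow_pos_of_pos hmR (1-c)]
    exact le_trans h2 h1
  · intro T hT
    have hTmem : T ∈ Finset.powersetCard r (univ : Finset (Fin n)) :=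
      Finset.mem_powersetCard.2 ⟨Finset.subset_univ T, hT⟩
    have h1 : (univ.filter fun b => ∀ a ∈ T, ω a b).card ≤ s := hgood2 T hTmem
    have heqf : (univ.filter fun b : Fin m => ∀ a ∈ T, b ∈ univ.filter (fun b' => ω a b'))
        = (univ.filter fun b => ∀ a ∈ T, ω a b) := by
      apply Finset.filter_congr
      intro b _
      simp
    rw [heqf]
    exact h1
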